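/- Let $C'$ be obtained from a comb $C$ by swapping the teeth $T_k$ and $T_{k+1}$ (with $k < n-1$). Then $P^{(<n)}_C(x) > P^{(<n)}_{C'}(x)$ if and only if $P_{T_k}(x) > P_{T_{k+1}}(x)$. -/

import Mathlib

/-- The restricted first-return generating function of a comb, as a function of the
list of first-return generating functions `[P_{T_1}(x), …, P_{T_{n-1}}(x)]` of its
teeth, via the recursion `P^{(<n)}_C(x) = (1-x)/(3 - P_{T_1}(x) - P^{(<n-1)}_{C_1}(x))`
with `P^{(<1)} = 0`. -/
noncomputable def combRestrictedP (x : ℝ) : List ℝ → ℝ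
  | [] => 0
  | a :: l => (1 - x) / (3 - a - combRestrictedP x l)

lemma combP_bounds (x : ℝ) (hx0 : 0 < x) (hx1 : x < 1) :
    ∀ l : List ℝ, (∀ c ∈ l, 0 < c ∧ c ≤ 1) →
      0 ≤ combRestrictedP x l ∧ combRestrictedP x l < 1 := by
  intro l
  induction l with
  | nil => intro _; simp [combRestrictedP]
  | cons a l ih =>
    intro h
    have ha := h a (by simp)
    have hl := ih (fun c hc => h c (by simp [hc]))
    have hden : 1 < 3 - a - combRestrictedP x l := by linarith [ha.2, hl.2]
    constructor
    · exact div_nonneg (by linarith) (by linarith)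
    · rw [combRestrictedP, div_lt_one (by linarith)]
      linarith [hl.1]

lemma combP_step_lt (x a p q : ℝ) (hx1 : x < 1) (ha1 : a ≤ 1)
    (hp : 0 ≤ p) (hp1 : p < 1) (hq : 0 ≤ q) (hq1 : q < 1) :
    ((1 - x) / (3 - a - p) < (1 - x) / (3 - a - q)) ↔ p < q := by
  have hdp : 0 < 3 - a - p := by linarith
  have hdq : 0 < 3 - a - q := by linarith
  rw [div_lt_div_iff_of_pos_left (by linarith) hdp hdq]
  constructor <;> intro h <;> linarith

lemma swap_core (x a b p : ℝ) (hx0 : 0 < x) (hx1 : x < 1)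
    (ha0 : 0 < a) (ha1 : a ≤ 1) (hb0 : 0 < b) (hb1 : b ≤ 1)
    (hp : 0 ≤ p) (hp1 : p < 1) :
    (1 - x) / (3 - a - (1 - x) / (3 - b - p)) >
      (1 - x) / (3 - b - (1 - x) / (3 - a - p)) ↔ a > b := by
  have h1x : 0 < 1 - x := by linarith
  have hD1 : 1 < 3 - b - p := by linarith
  have hD2 : 1 < 3 - a - p := by linarith
  have hf1 : (1 - x) / (3 - b - p) < 1 := by
    rw [div_lt_one (by linarith)]; linarith
  have hf1' : 0 < (1 - x) / (3 - b - p) := div_pos h1x (by linarith)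
  have hf2 : (1 - x) / (3 - a - p) < 1 := by
    rw [div_lt_one (by linarith)]; linarith
  have hf2' : 0 < (1 - x) / (3 - a - p) := div_pos h1x (by linarith)
  have hE1 : 0 < 3 - a - (1 - x) / (3 - b - p) := by linarith
  have hE2 : 0 < 3 - b - (1 - x) / (3 - a - p) := by linarith
  rw [gt_iff_lt, div_lt_div_iff_of_pos_left h1x hE2 hE1]
  have hDD : 1 < (3 - b - p) * (3 - a - p) := by nlinarith
  have hfac : 0 < 1 - (1 - x) / ((3 - b - p) * (3 - a - p)) := by
    have : (1 - x) / ((3 - b - p) * (3 - a - p)) < 1 := by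
      rw [div_lt_one (by linarith)]; linarith
    linarith
  have key : (3 - b - (1 - x) / (3 - a - p)) - (3 - a - (1 - x) / (3 - b - p))
      = (a - b) * (1 - (1 - x) / ((3 - b - p) * (3 - a - p))) := by
    field_simp
    ring
  constructor
  · intro h
    have h2 : 0 < (a - b) * (1 - (1 - x) / ((3 - b - p) * (3 - a - p))) := by
      linarith
    rcases mul_pos_iff.mp h2 with ⟨h3, _⟩ | ⟨_, h4⟩
    · linarith
    · linarith
  · intro h
    have h2 : 0 < (a - b) * (1 - (1 - x) / ((3 - b - p) * (3 - a - p))) :=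
      mul_pos (by linarith) hfac
    linarith

/-- Swapping two adjacent teeth `T_k` and `T_{k+1}` of a comb `C` (with `k < n-1`)
yields a comb `C'` with `P^{(<n)}_C(x) > P^{(<n)}_{C'}(x)` if and only if
`P_{T_k}(x) > P_{T_{k+1}}(x)`.  (Tooth generating functions take values in `(0,1]`.) -/
theorem comb_swap_adjacent_teeth (x a b : ℝ) (l₁ l₂ : List ℝ)
    (hx0 : 0 < x) (hx1 : x < 1)
    (ha : 0 < a ∧ a ≤ 1) (hb : 0 < b ∧ b ≤ 1)
    (hl : ∀ c ∈ l₁ ++ l₂, 0 < c ∧ c ≤ 1) :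
    combRestrictedP x (l₁ ++ a :: b :: l₂) > combRestrictedP x (l₁ ++ b :: a :: l₂)
      ↔ a > b := by
  induction l₁ with
  | nil =>
    have hl2 : ∀ c ∈ l₂, 0 < c ∧ c ≤ 1 := fun c hc => hl c (by simpa using hc)
    obtain ⟨hP0, hP1⟩ := combP_bounds x hx0 hx1 l₂ hl2
    simpa [combRestrictedP] using
      swap_core x a b (combRestrictedP x l₂) hx0 hx1 ha.1 ha.2 hb.1 hb.2 hP0 hP1
  | cons c l₁ ih =>
    have hc := hl c (by simp)
    have hl' : ∀ d ∈ l₁ ++ l₂, 0 < d ∧ d ≤ 1 := by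
      intro d hd
      apply hl
      simp only [List.mem_append] at hd ⊢
      tauto
    have hb1 : ∀ d ∈ l₁ ++ a :: b :: l₂, 0 < d ∧ d ≤ 1 := by
      intro d hd
      simp only [List.mem_append, List.mem_cons] at hd
      rcases hd with h | h | h | h
      · exact hl' d (by simp [h])
      · exact h ▸ ha
      · exact h ▸ hb
      · exact hl' d (by simp [h])
    have hb2 : ∀ d ∈ l₁ ++ b :: a :: l₂, 0 < d ∧ d ≤ 1 := by
      intro d hd
      simp only [List.mem_append, List.mem_cons] at hd
      rcases hd with h | h | h | h
      · exact hl' d (by simp [h])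
      · exact h ▸ hb
      · exact h ▸ ha
      · exact hl' d (by simp [h])
    obtain ⟨hP0, hP1⟩ := combP_bounds x hx0 hx1 _ hb1
    obtain ⟨hQ0, hQ1⟩ := combP_bounds x hx0 hx1 _ hb2
    have step := combP_step_lt x c (combRestrictedP x (l₁ ++ b :: a :: l₂))
      (combRestrictedP x (l₁ ++ a :: b :: l₂)) hx1 hc.2 hQ0 hQ1 hP0 hP1
    rw [show (c :: l₁) ++ a :: b :: l₂ = c :: (l₁ ++ a :: b :: l₂) by simp,
        show (c :: l₁) ++ b :: a :: l₂ = c :: (l₁ ++ b :: a :: l₂) by simp]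
    rw [gt_iff_lt, combRestrictedP, combRestrictedP, step]
    exact ih hl'
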